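/- arXiv:1512.04644 — 13 statements merged into one kernel-verified Lean document; each statement's English description precedes it below -/
import Mathlib

section
/- Assume 0 ≤ vl_i ≤ vu_i, 0 ≤ vl_j ≤ vu_j and −π/2 ≤ θl < 0 < θu ≤ π/2. Then for all reals v_i, v_j, θ with vl_i ≤ v_i ≤ vu_i, vl_j ≤ v_j ≤ vu_j and θl ≤ θ ≤ θu, one has min(vl_i·vl_j·cos θl, vl_i·vl_j·cos θu) ≤ v_i·v_j·cos θ ≤ vu_i·vu_j and vu_i·vu_j·sin θl ≤ v_i·v_j·sin θ ≤ vu_i·vu_j·sin θu. -/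
open Real

theorem voltage_product_bounds_mixed_angles
    (vli vui vlj vuj θl θu : ℝ)
    (hvli : 0 ≤ vli) (hvi : vli ≤ vui) (hvlj : 0 ≤ vlj) (hvj : vlj ≤ vuj)
    (hθl : -(Real.pi / 2) ≤ θl) (hθl0 : θl < 0) (hθu0 : 0 < θu) (hθu : θu ≤ Real.pi / 2) :
    ∀ vi vj θ : ℝ, vli ≤ vi → vi ≤ vui → vlj ≤ vj → vj ≤ vuj → θl ≤ θ → θ ≤ θu →
      (min (vli * vlj * Real.cos θl) (vli * vlj * Real.cos θu) ≤ vi * vj * Real.cos θ ∧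
        vi * vj * Real.cos θ ≤ vui * vuj) ∧
      (vui * vuj * Real.sin θl ≤ vi * vj * Real.sin θ ∧
        vi * vj * Real.sin θ ≤ vui * vuj * Real.sin θu) := by
  intro vi vj θ h1 h2 h3 h4 h5 h6
  have hπ := Real.pi_pos
  have hvi0 : 0 ≤ vi := le_trans hvli h1
  have hvj0 : 0 ≤ vj := le_trans hvlj h3
  have hvv0 : 0 ≤ vi * vj := mul_nonneg hvi0 hvj0
  have hvvl : vli * vlj ≤ vi * vj := mul_le_mul h1 h3 hvlj hvi0
  have hvvu : vi * vj ≤ vui * vuj := mul_le_mul h2 h4 hvj0 (hvi0.trans h2)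
  have hc0 : 0 ≤ Real.cos θ := Real.cos_nonneg_of_mem_Icc ⟨by linarith, by linarith⟩
  have hcl0 : 0 ≤ Real.cos θl := Real.cos_nonneg_of_mem_Icc ⟨by linarith, by linarith⟩
  have hcu0 : 0 ≤ Real.cos θu := Real.cos_nonneg_of_mem_Icc ⟨by linarith, by linarith⟩
  have hc1 : Real.cos θ ≤ 1 := Real.cos_le_one θ
  have hcoslow : min (Real.cos θl) (Real.cos θu) ≤ Real.cos θ := by
    rcases le_or_gt θ 0 with h | h
    · have := Real.cos_le_cos_of_nonneg_of_le_pi (by linarith : (0:ℝ) ≤ -θ)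
        (by linarith : -θl ≤ Real.pi) (by linarith : -θ ≤ -θl)
      rw [Real.cos_neg, Real.cos_neg] at this
      exact (min_le_left _ _).trans this
    · have := Real.cos_le_cos_of_nonneg_of_le_pi (by linarith : (0:ℝ) ≤ θ)
        (by linarith : θu ≤ Real.pi) h6
      exact (min_le_right _ _).trans this
  have hmono := Real.strictMonoOn_sin.monotoneOn
  have hs1 : Real.sin θl ≤ Real.sin θ :=
    hmono ⟨by linarith, by linarith⟩ ⟨by linarith, by linarith⟩ h5
  have hs2 : Real.sin θ ≤ Real.sin θu :=
    hmono ⟨by linarith, by linarith⟩ ⟨by linarith, by linarith⟩ h6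
  have hsl0 : Real.sin θl ≤ 0 := by
    have := Real.sin_nonneg_of_nonneg_of_le_pi (le_of_lt (neg_pos.mpr hθl0)) (by linarith : -θl ≤ Real.pi)
    rw [Real.sin_neg] at this; linarith
  have hsu0 : 0 ≤ Real.sin θu := Real.sin_nonneg_of_nonneg_of_le_pi hθu0.le (by linarith)
  refine ⟨⟨?_, ?_⟩, ?_, ?_⟩
  · calc min (vli * vlj * Real.cos θl) (vli * vlj * Real.cos θu)
        = vli * vlj * min (Real.cos θl) (Real.cos θu) := by
          rw [mul_min_of_nonneg _ _ (mul_nonneg hvli hvlj)]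
      _ ≤ vi * vj * Real.cos θ :=
          mul_le_mul hvvl hcoslow (le_min hcl0 hcu0) hvv0
  · calc vi * vj * Real.cos θ ≤ vui * vuj * 1 :=
          mul_le_mul hvvu hc1 hc0 (hvv0.trans hvvu)
      _ = vui * vuj := mul_one _
  · nlinarith [mul_nonneg hvv0 (sub_nonneg.2 hs1),
      mul_nonpos_of_nonneg_of_nonpos (sub_nonneg.2 hvvu) hsl0]
  · nlinarith [mul_nonneg hvv0 (sub_nonneg.2 hs2),
      mul_nonneg (sub_nonneg.2 hvvu) hsu0]
end

section
/- (Extreme cut.) For all reals v_i, v_j, θ with vl_i ≤ v_i ≤ vu_i, vl_j ≤ v_j ≤ vu_j and θl ≤ θ ≤ θu, setting w_i = v_i², wR = v_i·v_j·cos θ and wI = v_i·v_j·sin θ, the following inequality holds: vl_j·cos δ·w_i − vσ_i·cos φ·wR − vσ_i·sin φ·wI + vl_i·vu_i·vl_j·cos δ ≤ 0. -/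
open Real

theorem extreme_cut_valid
    (vli vui vlj vuj θl θu φ δ vσi : ℝ)
    (hvli : 0 < vli) (hvi : vli ≤ vui) (hvlj : 0 < vlj) (hvj : vlj ≤ vuj)
    (hθl : -(Real.pi / 2) ≤ θl) (hθ : θl ≤ θu) (hθu : θu ≤ Real.pi / 2)
    (hφ : φ = (θu + θl) / 2) (hδ : δ = (θu - θl) / 2) (hσi : vσi = vli + vui) :
    ∀ vi vj θ : ℝ, vli ≤ vi → vi ≤ vui → vlj ≤ vj → vj ≤ vuj → θl ≤ θ → θ ≤ θu →
      vlj * Real.cos δ * vi ^ 2 - vσi * Real.cos φ * (vi * vj * Real.cos θ)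
        - vσi * Real.sin φ * (vi * vj * Real.sin θ) + vli * vui * vlj * Real.cos δ ≤ 0 := by
  intro vi vj θ h1 h2 h3 h4 h5 h6
  subst hσi
  have hδ0 : 0 ≤ δ := by rw [hδ]; linarith
  have hδπ : δ ≤ Real.pi / 2 := by rw [hδ]; linarith
  have hcosδ : 0 ≤ Real.cos δ :=
    Real.cos_nonneg_of_mem_Icc ⟨by linarith, hδπ⟩
  have habs : |θ - φ| ≤ δ := abs_le.2 ⟨by rw [hφ, hδ] at *; linarith, by rw [hφ, hδ] at *; linarith⟩
  have hcos : Real.cos δ ≤ Real.cos (θ - φ) := by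
    rw [← Real.cos_abs (θ - φ)]
    exact Real.cos_le_cos_of_nonneg_of_le_pi (abs_nonneg _) (by linarith [Real.pi_pos]) habs
  have hmul : vlj * Real.cos δ ≤ vj * Real.cos (θ - φ) :=
    mul_le_mul h3 hcos hcosδ (by linarith)
  have hA : 0 ≤ (vli + vui) * vi * (vj * Real.cos (θ - φ) - vlj * Real.cos δ) :=
    mul_nonneg (mul_nonneg (by linarith) (by linarith)) (by linarith)
  have hB : 0 ≤ vlj * Real.cos δ * ((vi - vli) * (vui - vi)) :=
    mul_nonneg (mul_nonneg (by linarith) hcosδ)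
      (mul_nonneg (by linarith) (by linarith))
  have key : (vli + vui) * Real.cos φ * (vi * vj * Real.cos θ)
      + (vli + vui) * Real.sin φ * (vi * vj * Real.sin θ)
      = (vli + vui) * vi * (vj * Real.cos (θ - φ)) := by
    rw [Real.cos_sub]; ring
  nlinarith [hA, hB, key]
end

section
/- (Extreme cut, second form.) For all reals v_i, v_j, θ with vl_i ≤ v_i ≤ vu_i, vl_j ≤ v_j ≤ vu_j and θl ≤ θ ≤ θu, setting w_j = v_j², wR = v_i·v_j·cos θ and wI = v_i·v_j·sin θ, the following inequality holds: vl_i·cos δ·w_j − vσ_j·cos φ·wR − vσ_j·sin φ·wI + vl_j·vu_j·vl_i·cos δ ≤ 0. -/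
open Real

theorem extreme_cut_second_form_valid
    (vli vui vlj vuj θl θu φ δ vσj : ℝ)
    (hvli : 0 < vli) (hvi : vli ≤ vui) (hvlj : 0 < vlj) (hvj : vlj ≤ vuj)
    (hθl : -(Real.pi / 2) ≤ θl) (hθ : θl ≤ θu) (hθu : θu ≤ Real.pi / 2)
    (hφ : φ = (θu + θl) / 2) (hδ : δ = (θu - θl) / 2) (hσj : vσj = vlj + vuj) :
    ∀ vi vj θ : ℝ, vli ≤ vi → vi ≤ vui → vlj ≤ vj → vj ≤ vuj → θl ≤ θ → θ ≤ θu →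
      vli * Real.cos δ * vj ^ 2 - vσj * Real.cos φ * (vi * vj * Real.cos θ)
        - vσj * Real.sin φ * (vi * vj * Real.sin θ) + vlj * vuj * vli * Real.cos δ ≤ 0 := by
  intro vi vj θ h1 h2 h3 h4 h5 h6
  have hδ0 : 0 ≤ δ := by rw [hδ]; linarith
  have hδpi : δ ≤ Real.pi / 2 := by rw [hδ]; linarith
  have hcδ : 0 ≤ Real.cos δ := Real.cos_nonneg_of_mem_Icc ⟨by linarith, hδpi⟩
  have habs : |θ - φ| ≤ δ := by
    rw [abs_le]; constructor <;> (rw [hφ, hδ]; linarith)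
  have hcc : Real.cos δ ≤ Real.cos (θ - φ) := by
    rw [← Real.cos_abs (θ - φ)]
    apply Real.cos_le_cos_of_nonneg_of_le_pi (abs_nonneg _) (by linarith [Real.pi_pos])
    exact habs
  have hkey : Real.cos φ * Real.cos θ + Real.sin φ * Real.sin θ = Real.cos (θ - φ) := by
    rw [Real.cos_sub]; ring
  have hvj0 : 0 < vj := lt_of_lt_of_le hvlj h3
  have hvi0 : 0 < vi := lt_of_lt_of_le hvli h1
  have hσ0 : 0 ≤ vσj := by rw [hσj]; linarith
  have step1 : vσj * vli * vj * Real.cos δ ≤ vσj * vi * vj * Real.cos (θ - φ) := by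
    have h0 : vσj * vli * vj ≤ vσj * vi * vj := by
      nlinarith [mul_nonneg hσ0 hvj0.le]
    have h1' : 0 ≤ vσj * vli * vj := by positivity
    calc vσj * vli * vj * Real.cos δ ≤ vσj * vli * vj * Real.cos (θ - φ) :=
          mul_le_mul_of_nonneg_left hcc h1'
      _ ≤ vσj * vi * vj * Real.cos (θ - φ) := by
          have hc0 : 0 ≤ Real.cos (θ - φ) := le_trans hcδ hcc
          exact mul_le_mul_of_nonneg_right h0 hc0
  have step2 : vli * Real.cos δ * vj ^ 2 + vlj * vuj * vli * Real.cos δ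
      ≤ vσj * vli * vj * Real.cos δ := by
    have h : vli * (vj - vlj) * (vj - vuj) ≤ 0 :=
      mul_nonpos_of_nonneg_of_nonpos (by nlinarith) (by linarith)
    have h2' : (0:ℝ) ≤ vσj * vli * vj - vli * vj ^ 2 - vlj * vuj * vli := by rw [hσj]; nlinarith [h]
    nlinarith [mul_nonneg hcδ h2']
  have hexp : vσj * Real.cos φ * (vi * vj * Real.cos θ)
      + vσj * Real.sin φ * (vi * vj * Real.sin θ)
      = vσj * vi * vj * Real.cos (θ - φ) := by
    rw [← hkey]; ring
  linarith
end

section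
/- Assume additionally −π/2 < θl ≤ θu < π/2. Let wR, wI, w_i be real numbers satisfying: (vl_i)² ≤ w_i ≤ (vu_i)², tan(θl)·wR ≤ wI ≤ tan(θu)·wR, the second-order-cone bound wR² + wI² ≤ w_i·(vu_j)², and the Extreme cut vl_j·cos δ·w_i − vσ_i·cos φ·wR − vσ_i·sin φ·wI + vl_i·vu_i·vl_j·cos δ ≤ 0. Then c11·wR + c12·wI + c13·w_i + c14·(wR² + wI²)/w_i + c15 ≥ 0, where c11 = vσ_i·vσ_j·cos φ, c12 = vσ_i·vσ_j·sin φ, c13 = −vu_j·cos δ·vσ_j, c14 = −vu_i·cos δ·vσ_i, c15 = −vu_i·vu_j·cos δ·(vl_i·vl_j − vu_i·vu_j). -/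
open Real

set_option maxHeartbeats 1000000

theorem vub_cut_on_relaxed_set
    (vli vui vlj vuj θl θu φ δ vσi vσj : ℝ)
    (hvli : 0 < vli) (hvi : vli ≤ vui) (hvlj : 0 < vlj) (hvj : vlj ≤ vuj)
    (hθl : -(Real.pi / 2) < θl) (hθ : θl ≤ θu) (hθu : θu < Real.pi / 2)
    (hφ : φ = (θu + θl) / 2) (hδ : δ = (θu - θl) / 2)
    (hσi : vσi = vli + vui) (hσj : vσj = vlj + vuj)
    (wR wI wi : ℝ)
    (hwil : vli ^ 2 ≤ wi) (hwiu : wi ≤ vui ^ 2)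
    (hpadl : Real.tan θl * wR ≤ wI) (hpadu : wI ≤ Real.tan θu * wR)
    (hsoc : wR ^ 2 + wI ^ 2 ≤ wi * vuj ^ 2)
    (hec : vlj * Real.cos δ * wi - vσi * Real.cos φ * wR - vσi * Real.sin φ * wI
      + vli * vui * vlj * Real.cos δ ≤ 0) :
    vσi * vσj * Real.cos φ * wR + vσi * vσj * Real.sin φ * wI
      + (-(vuj * Real.cos δ * vσj)) * wi
      + (-(vui * Real.cos δ * vσi)) * ((wR ^ 2 + wI ^ 2) / wi)
      + (-(vui * vuj * Real.cos δ * (vli * vlj - vui * vuj))) ≥ 0 := by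
  have hvui : 0 < vui := lt_of_lt_of_le hvli hvi
  have hvuj : 0 < vuj := lt_of_lt_of_le hvlj hvj
  have hS : 0 < vσi := by rw [hσi]; linarith
  have hT : 0 < vσj := by rw [hσj]; linarith
  have hwi : 0 < wi := lt_of_lt_of_le (by positivity) hwil
  have hc : 0 < Real.cos δ := by
    apply Real.cos_pos_of_mem_Ioo
    constructor
    · rw [hδ]; nlinarith [Real.pi_pos]
    · rw [hδ]; nlinarith [Real.pi_pos]
  have hcl : 0 < Real.cos θl := Real.cos_pos_of_mem_Ioo ⟨hθl, by linarith⟩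
  have hcu : 0 < Real.cos θu := Real.cos_pos_of_mem_Ioo ⟨by linarith, hθu⟩
  set u : ℝ := Real.cos φ * wR + Real.sin φ * wI with hu_def
  have hu1 : vlj * Real.cos δ * (wi + vli * vui) ≤ vσi * u := by
    rw [hu_def]; nlinarith [hec]
  have hu0 : 0 < u := by
    have h1 : 0 < vlj * Real.cos δ * (wi + vli * vui) := by positivity
    have h2 : 0 < vσi * u := lt_of_lt_of_le h1 hu1
    exact (mul_lt_mul_iff_right₀ hS).mp (by rw [mul_zero]; exact h2)
  -- r = norm
  set r : ℝ := Real.sqrt (wR ^ 2 + wI ^ 2) with hr_def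
  have hr0 : 0 ≤ r := Real.sqrt_nonneg _
  have hr2 : r ^ 2 = wR ^ 2 + wI ^ 2 := Real.sq_sqrt (by positivity)
  -- angle facts
  have htanu : Real.tan θu * Real.cos θu = Real.sin θu := Real.tan_mul_cos (ne_of_gt hcu)
  have htanl : Real.tan θl * Real.cos θl = Real.sin θl := Real.tan_mul_cos (ne_of_gt hcl)
  have ha : 0 ≤ Real.sin θu * wR - Real.cos θu * wI := by
    have h := mul_le_mul_of_nonneg_left hpadu hcu.le
    rw [show Real.cos θu * (Real.tan θu * wR) = Real.tan θu * Real.cos θu * wR by ring,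
      htanu] at h
    linarith
  have hb : 0 ≤ Real.cos θl * wI - Real.sin θl * wR := by
    have h := mul_le_mul_of_nonneg_left hpadl hcl.le
    rw [show Real.cos θl * (Real.tan θl * wR) = Real.tan θl * Real.cos θl * wR by ring,
      htanl] at h
    linarith
  -- trig identity via half angles
  have hid : u ^ 2 - (Real.cos δ) ^ 2 * (wR ^ 2 + wI ^ 2)
      = (Real.sin θu * wR - Real.cos θu * wI) * (Real.cos θl * wI - Real.sin θl * wR) := by
    have e1 : Real.cos φ = Real.cos (θu/2) * Real.cos (θl/2) - Real.sin (θu/2) * Real.sin (θl/2) := by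
      rw [hφ, show (θu + θl) / 2 = θu/2 + θl/2 by ring, Real.cos_add]
    have e2 : Real.sin φ = Real.sin (θu/2) * Real.cos (θl/2) + Real.cos (θu/2) * Real.sin (θl/2) := by
      rw [hφ, show (θu + θl) / 2 = θu/2 + θl/2 by ring, Real.sin_add]
    have e3 : Real.cos δ = Real.cos (θu/2) * Real.cos (θl/2) + Real.sin (θu/2) * Real.sin (θl/2) := by
      rw [hδ, show (θu - θl) / 2 = θu/2 - θl/2 by ring, Real.cos_sub]
    have e4 : Real.sin θu = 2 * Real.sin (θu/2) * Real.cos (θu/2) := by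
      rw [show θu = 2 * (θu/2) by ring, Real.sin_two_mul]; ring_nf
    have e5 : Real.cos θu = Real.cos (θu/2) ^ 2 - Real.sin (θu/2) ^ 2 := by
      rw [show θu = 2 * (θu/2) by ring, Real.cos_two_mul']; ring_nf
    have e6 : Real.sin θl = 2 * Real.sin (θl/2) * Real.cos (θl/2) := by
      rw [show θl = 2 * (θl/2) by ring, Real.sin_two_mul]; ring_nf
    have e7 : Real.cos θl = Real.cos (θl/2) ^ 2 - Real.sin (θl/2) ^ 2 := by
      rw [show θl = 2 * (θl/2) by ring, Real.cos_two_mul']; ring_nf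
    rw [hu_def, e1, e2, e3, e4, e5, e6, e7]; ring
  have hur : Real.cos δ * r ≤ u := by
    nlinarith [mul_nonneg ha hb, hid, hr2, hu0, mul_nonneg hc.le hr0]
  -- y = sqrt wi
  set y : ℝ := Real.sqrt wi with hy_def
  have hy0 : 0 ≤ y := Real.sqrt_nonneg _
  have hy2 : y ^ 2 = wi := Real.sq_sqrt hwi.le
  have hya : vli ≤ y := by
    rw [hy_def, show vli = Real.sqrt (vli ^ 2) by rw [Real.sqrt_sq hvli.le]]
    exact Real.sqrt_le_sqrt hwil
  have hyb : y ≤ vui := by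
    rw [hy_def, show vui = Real.sqrt (vui ^ 2) by rw [Real.sqrt_sq hvui.le]]
    exact Real.sqrt_le_sqrt hwiu
  have hry : r ≤ vuj * y := by
    have h := Real.sqrt_le_sqrt hsoc
    rwa [Real.sqrt_mul hwi.le, Real.sqrt_sq hvuj.le, ← hy_def, mul_comm] at h
  -- Pp lemma
  set Q : ℝ := vlj * (y ^ 2 + vli * vui) with hQ_def
  have hQ0 : 0 < Q := by rw [hQ_def]; positivity
  set Pp : ℝ := vσi ^ 2 * vσj * Q * y ^ 2 - vui * vσi * Q ^ 2
      - vσi ^ 2 * (vuj * vσj * y ^ 4 + vui * vuj * (vli * vlj - vui * vuj) * y ^ 2) with hPp_def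
  have hPp : 0 ≤ Pp := by
    rcases eq_or_lt_of_le hvi with heq | hlt
    · have hyv : y = vli := le_antisymm (heq ▸ hyb) hya
      have : Pp = 0 := by rw [hPp_def, hQ_def, hyv, ← heq, hσi, hσj, ← heq]; ring
      linarith
    · have hx1 : 0 ≤ y ^ 2 - vli ^ 2 := sub_nonneg.mpr (pow_le_pow_left₀ hvli.le hya 2)
      have hx2 : 0 ≤ vui ^ 2 - y ^ 2 := sub_nonneg.mpr (pow_le_pow_left₀ hy0 hyb 2)
      have hx3 : 0 < vui ^ 2 - vli ^ 2 :=
        sub_pos.mpr (pow_lt_pow_left₀ hlt hvli.le (by norm_num))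
      have hL : 0 ≤ vσi * (vσi * vuj ^ 2 - vli * vlj ^ 2) := by
        have h1 : vli * vlj ^ 2 ≤ vσi * vuj ^ 2 := by
          have e1 : vli * vlj ^ 2 ≤ vli * vuj ^ 2 :=
            mul_le_mul_of_nonneg_left (pow_le_pow_left₀ hvlj.le hvj 2) hvli.le
          have e2 : vli * vuj ^ 2 ≤ vσi * vuj ^ 2 :=
            mul_le_mul_of_nonneg_right (by rw [hσi]; linarith) (by positivity)
          linarith
        exact mul_nonneg hS.le (sub_nonneg.mpr h1)
      have hint1 : 0 ≤ (y ^ 2 - vli ^ 2) * (vui ^ 2 - y ^ 2) * (vui ^ 2 - vli ^ 2)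
          * (vσi * (vσi * vuj ^ 2 - vli * vlj ^ 2)) :=
        mul_nonneg (mul_nonneg (mul_nonneg hx1 hx2) hx3.le) hL
      have hint2 : 0 ≤ (vui ^ 2 - y ^ 2)
          * (vli ^ 2 * vσi ^ 3 * (vui - vli) * (vuj - vlj) * vσj) := by
        have h2 : 0 ≤ vli ^ 2 * vσi ^ 3 * (vui - vli) * (vuj - vlj) * vσj := by
          have := sub_nonneg.mpr hvi
          have := sub_nonneg.mpr hvj
          positivity
        exact mul_nonneg hx2 h2
      have hiden : (vui ^ 2 - vli ^ 2) * Pp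
          = (vui ^ 2 - y ^ 2) * (vli ^ 2 * vσi ^ 3 * (vui - vli) * (vuj - vlj) * vσj)
            + (y ^ 2 - vli ^ 2) * (vui ^ 2 - y ^ 2) * (vui ^ 2 - vli ^ 2)
              * (vσi * (vσi * vuj ^ 2 - vli * vlj ^ 2)) := by
        rw [hPp_def, hQ_def, hσi, hσj]; ring
      have hPx : 0 ≤ (vui ^ 2 - vli ^ 2) * Pp := by rw [hiden]; exact add_nonneg hint2 hint1
      have h0 : (vui ^ 2 - vli ^ 2) * 0 ≤ (vui ^ 2 - vli ^ 2) * Pp := by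
        rw [mul_zero]; exact hPx
      exact (mul_le_mul_iff_right₀ hx3).mp h0
  -- main key inequality (goal multiplied by wi, expressed with y)
  have hkey : 0 ≤ vσi * vσj * u * y ^ 2
      - Real.cos δ * (vui * vσi * r ^ 2 + vuj * vσj * y ^ 4
        + vui * vuj * (vli * vlj - vui * vuj) * y ^ 2) := by
    by_cases hcase : vσi * r ≤ Q
    · -- case B : EC bound dominates
      have hQr2 : 0 ≤ Q ^ 2 - vσi ^ 2 * r ^ 2 := by
        have e : Q ^ 2 - vσi ^ 2 * r ^ 2 = (Q - vσi * r) * (Q + vσi * r) := by ring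
        rw [e]
        exact mul_nonneg (sub_nonneg.mpr hcase) (add_nonneg hQ0.le (mul_nonneg hS.le hr0))
      have hucQ : 0 ≤ vσi * u - Real.cos δ * Q := by
        rw [hQ_def, hy2,
          show Real.cos δ * (vlj * (wi + vli * vui)) = vlj * Real.cos δ * (wi + vli * vui)
            from by ring]
        exact sub_nonneg.mpr hu1
      have t1 : 0 ≤ vσi ^ 2 * vσj * y ^ 2 * (vσi * u - Real.cos δ * Q) :=
        mul_nonneg (by positivity) hucQ
      have t2 : 0 ≤ Real.cos δ * vui * vσi * (Q ^ 2 - vσi ^ 2 * r ^ 2) :=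
        mul_nonneg (by positivity) hQr2
      have t3 : 0 ≤ Real.cos δ * Pp := mul_nonneg hc.le hPp
      have hidB : vσi ^ 2 * (vσi * vσj * u * y ^ 2
            - Real.cos δ * (vui * vσi * r ^ 2 + vuj * vσj * y ^ 4
              + vui * vuj * (vli * vlj - vui * vuj) * y ^ 2))
          = vσi ^ 2 * vσj * y ^ 2 * (vσi * u - Real.cos δ * Q)
            + Real.cos δ * vui * vσi * (Q ^ 2 - vσi ^ 2 * r ^ 2)
            + Real.cos δ * Pp := by
        rw [hPp_def]; ring
      have hS2 : (0:ℝ) < vσi ^ 2 := by positivity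
      have hPx : vσi ^ 2 * 0 ≤ vσi ^ 2 * (vσi * vσj * u * y ^ 2
          - Real.cos δ * (vui * vσi * r ^ 2 + vuj * vσj * y ^ 4
            + vui * vuj * (vli * vlj - vui * vuj) * y ^ 2)) := by
        rw [mul_zero, hidB]; exact add_nonneg (add_nonneg t1 t2) t3
      exact (mul_le_mul_iff_right₀ hS2).mp hPx
    · -- case A : SOC bound dominates
      push_neg at hcase
      have hSr : vσi * r ≤ vσi * (vuj * y) := mul_le_mul_of_nonneg_left hry hS.le
      have hpivot : 0 < vσi * (vuj * y) - Q := by linarith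
      have hq2 : 0 ≤ vσj * vuj * y ^ 2 * (y - vli) * (vui - y) := by
        have h1 : 0 ≤ y - vli := by linarith
        have h2 : 0 ≤ vui - y := by linarith
        positivity
      have t1 : 0 ≤ vσi * (vuj * y - r) * Pp :=
        mul_nonneg (mul_nonneg hS.le (by linarith)) hPp
      have t2 : 0 ≤ vσi ^ 2 * (vσi * r - Q) * (vσj * vuj * y ^ 2 * (y - vli) * (vui - y)) :=
        mul_nonneg (mul_nonneg (by positivity) (by linarith)) hq2
      have t3 : 0 ≤ vui * vσi ^ 2 * (vσi * r - Q) * (vuj * y - r) * (vσi * (vuj * y) - Q) := by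
        have h1 : 0 ≤ vσi * r - Q := by linarith
        have h2 : 0 ≤ vuj * y - r := by linarith
        have h3 : 0 ≤ vσi * (vuj * y) - Q := hpivot.le
        positivity
      have hidA : (vσi ^ 2 * (vσi * (vuj * y) - Q)) * (vσi * vσj * r * y ^ 2
            - vui * vσi * r ^ 2 - vuj * vσj * y ^ 4
            - vui * vuj * (vli * vlj - vui * vuj) * y ^ 2)
          = vσi * (vuj * y - r) * Pp
            + vσi ^ 2 * (vσi * r - Q) * (vσj * vuj * y ^ 2 * (y - vli) * (vui - y))
            + vui * vσi ^ 2 * (vσi * r - Q) * (vuj * y - r) * (vσi * (vuj * y) - Q) := by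
        rw [hPp_def, hσi, hσj]; ring
      have hpiv2 : (0:ℝ) < vσi ^ 2 * (vσi * (vuj * y) - Q) := by positivity
      have hFx : (vσi ^ 2 * (vσi * (vuj * y) - Q)) * 0
          ≤ (vσi ^ 2 * (vσi * (vuj * y) - Q)) * (vσi * vσj * r * y ^ 2
            - vui * vσi * r ^ 2 - vuj * vσj * y ^ 4
            - vui * vuj * (vli * vlj - vui * vuj) * y ^ 2) := by
        rw [mul_zero, hidA]; exact add_nonneg (add_nonneg t1 t2) t3
      have hF : 0 ≤ vσi * vσj * r * y ^ 2 - vui * vσi * r ^ 2 - vuj * vσj * y ^ 4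
          - vui * vuj * (vli * vlj - vui * vuj) * y ^ 2 := (mul_le_mul_iff_right₀ hpiv2).mp hFx
      have t4 : 0 ≤ vσi * vσj * y ^ 2 * (u - Real.cos δ * r) :=
        mul_nonneg (by positivity) (by linarith)
      have t5 : 0 ≤ Real.cos δ * (vσi * vσj * r * y ^ 2 - vui * vσi * r ^ 2 - vuj * vσj * y ^ 4
          - vui * vuj * (vli * vlj - vui * vuj) * y ^ 2) := mul_nonneg hc.le hF
      have hidA2 : vσi * vσj * u * y ^ 2
            - Real.cos δ * (vui * vσi * r ^ 2 + vuj * vσj * y ^ 4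
              + vui * vuj * (vli * vlj - vui * vuj) * y ^ 2)
          = vσi * vσj * y ^ 2 * (u - Real.cos δ * r)
            + Real.cos δ * (vσi * vσj * r * y ^ 2 - vui * vσi * r ^ 2 - vuj * vσj * y ^ 4
              - vui * vuj * (vli * vlj - vui * vuj) * y ^ 2) := by ring
      rw [hidA2]; exact add_nonneg t4 t5
  -- conclude : divide hkey by wi
  rw [ge_iff_le, ← sub_nonneg]
  have hEq : (vσi * vσj * Real.cos φ * wR + vσi * vσj * Real.sin φ * wI
      + (-(vuj * Real.cos δ * vσj)) * wi
      + (-(vui * Real.cos δ * vσi)) * ((wR ^ 2 + wI ^ 2) / wi)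
      + (-(vui * vuj * Real.cos δ * (vli * vlj - vui * vuj))) - 0) * wi
      = vσi * vσj * u * y ^ 2
        - Real.cos δ * (vui * vσi * r ^ 2 + vuj * vσj * y ^ 4
          + vui * vuj * (vli * vlj - vui * vuj) * y ^ 2) := by
    have hy4 : y ^ 4 = wi ^ 2 := by rw [← hy2]; ring
    rw [hu_def, hr2, hy4, hy2]
    field_simp
    ring
  have hPx : 0 * wi ≤ (vσi * vσj * Real.cos φ * wR + vσi * vσj * Real.sin φ * wI
      + (-(vuj * Real.cos δ * vσj)) * wi
      + (-(vui * Real.cos δ * vσi)) * ((wR ^ 2 + wI ^ 2) / wi)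
      + (-(vui * vuj * Real.cos δ * (vli * vlj - vui * vuj))) - 0) * wi := by
    rw [zero_mul, hEq]; exact hkey
  exact (mul_le_mul_iff_left₀ hwi).mp hPx
end

section
/- (VUB nonlinear cut.) For all reals v_i, v_j, θ with vl_i ≤ v_i ≤ vu_i, vl_j ≤ v_j ≤ vu_j and θl ≤ θ ≤ θu, setting w_i = v_i², wR = v_i·v_j·cos θ and wI = v_i·v_j·sin θ, one has c11·wR + c12·wI + c13·w_i + c14·(wR² + wI²)/w_i + c15 ≥ 0, where c11 = vσ_i·vσ_j·cos φ, c12 = vσ_i·vσ_j·sin φ, c13 = −vu_j·cos δ·vσ_j, c14 = −vu_i·cos δ·vσ_i, c15 = −vu_i·vu_j·cos δ·(vl_i·vl_j − vu_i·vu_j). -/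
open Real

theorem vub_nonlinear_cut_valid
    (vli vui vlj vuj θl θu φ δ vσi vσj : ℝ)
    (hvli : 0 < vli) (hvi : vli ≤ vui) (hvlj : 0 < vlj) (hvj : vlj ≤ vuj)
    (hθl : -(Real.pi / 2) ≤ θl) (hθ : θl ≤ θu) (hθu : θu ≤ Real.pi / 2)
    (hφ : φ = (θu + θl) / 2) (hδ : δ = (θu - θl) / 2)
    (hσi : vσi = vli + vui) (hσj : vσj = vlj + vuj) :
    ∀ vi vj θ : ℝ, vli ≤ vi → vi ≤ vui → vlj ≤ vj → vj ≤ vuj → θl ≤ θ → θ ≤ θu →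
      vσi * vσj * Real.cos φ * (vi * vj * Real.cos θ)
        + vσi * vσj * Real.sin φ * (vi * vj * Real.sin θ)
        + (-(vuj * Real.cos δ * vσj)) * vi ^ 2
        + (-(vui * Real.cos δ * vσi)) *
            (((vi * vj * Real.cos θ) ^ 2 + (vi * vj * Real.sin θ) ^ 2) / vi ^ 2)
        + (-(vui * vuj * Real.cos δ * (vli * vlj - vui * vuj))) ≥ 0 := by
  intro vi vj θ h1 h2 h3 h4 h5 h6
  have hvi0 : 0 < vi := lt_of_lt_of_le hvli h1
  have hvj0 : 0 < vj := lt_of_lt_of_le hvlj h3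
  have hdiv : ((vi * vj * Real.cos θ) ^ 2 + (vi * vj * Real.sin θ) ^ 2) / vi ^ 2 = vj ^ 2 := by
    have hpyth := Real.sin_sq_add_cos_sq θ
    have hnum : (vi * vj * Real.cos θ) ^ 2 + (vi * vj * Real.sin θ) ^ 2 = vj ^ 2 * vi ^ 2 := by
      linear_combination vi ^ 2 * vj ^ 2 * hpyth
    rw [hnum]
    field_simp
  rw [hdiv]
  have hδ0 : 0 ≤ δ := by rw [hδ]; linarith
  have hδπ : δ ≤ Real.pi / 2 := by rw [hδ]; linarith
  have hcδ : 0 ≤ Real.cos δ := Real.cos_nonneg_of_mem_Icc ⟨by linarith, hδπ⟩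
  have habs : |θ - φ| ≤ δ := by
    rw [abs_le, hφ, hδ]; constructor <;> linarith
  have hcosge : Real.cos δ ≤ Real.cos (θ - φ) := by
    rw [← Real.cos_abs (θ - φ)]
    exact Real.cos_le_cos_of_nonneg_of_le_pi (abs_nonneg _) (by linarith [Real.pi_pos]) habs
  have hσi0 : 0 < vσi := by rw [hσi]; linarith
  have hσj0 : 0 < vσj := by rw [hσj]; linarith
  have hprodpos : 0 ≤ vσi * vσj * vi * vj :=
    mul_nonneg (mul_nonneg (mul_nonneg hσi0.le hσj0.le) hvi0.le) hvj0.le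
  have key : vσi * vσj * Real.cos φ * (vi * vj * Real.cos θ)
      + vσi * vσj * Real.sin φ * (vi * vj * Real.sin θ)
      ≥ vσi * vσj * vi * vj * Real.cos δ := by
    have heq : vσi * vσj * Real.cos φ * (vi * vj * Real.cos θ)
        + vσi * vσj * Real.sin φ * (vi * vj * Real.sin θ)
        = vσi * vσj * vi * vj * Real.cos (θ - φ) := by
      rw [Real.cos_sub]; ring
    rw [heq]
    exact mul_le_mul_of_nonneg_left hcosge hprodpos
  have t1 : 0 ≤ vuj * (vlj + vuj) * ((vui - vi) * (vi - vli)) :=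
    mul_nonneg (mul_nonneg (by linarith) (by linarith)) (mul_nonneg (sub_nonneg.2 h2) (sub_nonneg.2 h1))
  have t2 : 0 ≤ vui * (vli + vui) * ((vuj - vj) * (vj - vlj)) :=
    mul_nonneg (mul_nonneg (by linarith) (by linarith)) (mul_nonneg (sub_nonneg.2 h4) (sub_nonneg.2 h3))
  have t3 : 0 ≤ (vli + vui) * (vlj + vuj) * ((vui - vi) * (vuj - vj)) :=
    mul_nonneg (mul_nonneg (by linarith) (by linarith)) (mul_nonneg (sub_nonneg.2 h2) (sub_nonneg.2 h4))
  have hF : 0 ≤ vσi * vσj * (vi * vj) - vuj * vσj * vi ^ 2 - vui * vσi * vj ^ 2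
      - vui * vuj * (vli * vlj - vui * vuj) := by
    rw [hσi, hσj]; linarith [t1, t2, t3]
  linarith [key, mul_nonneg hcδ hF]
end

section
/- (VLB nonlinear cut.) For all reals v_i, v_j, θ with vl_i ≤ v_i ≤ vu_i, vl_j ≤ v_j ≤ vu_j and θl ≤ θ ≤ θu, setting w_i = v_i², wR = v_i·v_j·cos θ and wI = v_i·v_j·sin θ, one has c21·wR + c22·wI + c23·w_i + c24·(wR² + wI²)/w_i + c25 ≥ 0, where c21 = vσ_i·vσ_j·cos φ, c22 = vσ_i·vσ_j·sin φ, c23 = −vl_j·cos δ·vσ_j, c24 = −vl_i·cos δ·vσ_i, c25 = vl_i·vl_j·cos δ·(vl_i·vl_j − vu_i·vu_j). -/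
open Real

theorem vlb_nonlinear_cut_valid
    (vli vui vlj vuj θl θu φ δ vσi vσj : ℝ)
    (hvli : 0 < vli) (hvi : vli ≤ vui) (hvlj : 0 < vlj) (hvj : vlj ≤ vuj)
    (hθl : -(Real.pi / 2) ≤ θl) (hθ : θl ≤ θu) (hθu : θu ≤ Real.pi / 2)
    (hφ : φ = (θu + θl) / 2) (hδ : δ = (θu - θl) / 2)
    (hσi : vσi = vli + vui) (hσj : vσj = vlj + vuj) :
    ∀ vi vj θ : ℝ, vli ≤ vi → vi ≤ vui → vlj ≤ vj → vj ≤ vuj → θl ≤ θ → θ ≤ θu →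
      vσi * vσj * Real.cos φ * (vi * vj * Real.cos θ)
        + vσi * vσj * Real.sin φ * (vi * vj * Real.sin θ)
        + (-(vlj * Real.cos δ * vσj)) * vi ^ 2
        + (-(vli * Real.cos δ * vσi)) *
            (((vi * vj * Real.cos θ) ^ 2 + (vi * vj * Real.sin θ) ^ 2) / vi ^ 2)
        + vli * vlj * Real.cos δ * (vli * vlj - vui * vuj) ≥ 0 := by
  intro vi vj θ h1 h2 h3 h4 h5 h6
  have hvi0 : 0 < vi := lt_of_lt_of_le hvli h1
  have hvj0 : 0 < vj := lt_of_lt_of_le hvlj h3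
  have hdiv : ((vi * vj * Real.cos θ) ^ 2 + (vi * vj * Real.sin θ) ^ 2) / vi ^ 2
      = vj ^ 2 := by
    have h := Real.sin_sq_add_cos_sq θ
    have hnum : (vi * vj * Real.cos θ) ^ 2 + (vi * vj * Real.sin θ) ^ 2
        = vj ^ 2 * vi ^ 2 := by nlinarith [h]
    rw [hnum]
    field_simp
  rw [hdiv]
  have hcos : Real.cos φ * Real.cos θ + Real.sin φ * Real.sin θ = Real.cos (θ - φ) := by
    rw [Real.cos_sub]; ring
  have hδ0 : 0 ≤ δ := by rw [hδ]; linarith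
  have hδπ : δ ≤ Real.pi / 2 := by rw [hδ]; linarith
  have habs : |θ - φ| ≤ δ := by
    rw [abs_le]; constructor <;> (rw [hφ, hδ]; linarith)
  have hpi : 0 < Real.pi := Real.pi_pos
  have hcδ : Real.cos δ ≤ Real.cos (θ - φ) := by
    rw [← Real.cos_abs (θ - φ)]
    exact Real.cos_le_cos_of_nonneg_of_le_pi (abs_nonneg _) (by linarith) habs
  have hcδ0 : 0 ≤ Real.cos δ :=
    Real.cos_nonneg_of_mem_Icc ⟨by linarith, by linarith⟩
  have hσi0 : 0 < vσi := by rw [hσi]; linarith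
  have hσj0 : 0 < vσj := by rw [hσj]; linarith
  have hf : 0 ≤ vσi * vσj * vi * vj - vlj * vσj * vi ^ 2 - vli * vσi * vj ^ 2
      + vli * vlj * (vli * vlj - vui * vuj) := by
    have t1 : 0 ≤ vlj * vσj * ((vi - vli) * (vui - vi)) :=
      mul_nonneg (mul_nonneg hvlj.le hσj0.le)
        (mul_nonneg (by linarith) (by linarith))
    have t2 : 0 ≤ vli * vσi * ((vj - vlj) * (vuj - vj)) :=
      mul_nonneg (mul_nonneg hvli.le hσi0.le)
        (mul_nonneg (by linarith) (by linarith))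
    have t3 : 0 ≤ vσi * vσj * ((vi - vli) * (vj - vlj)) :=
      mul_nonneg (mul_nonneg hσi0.le hσj0.le)
        (mul_nonneg (by linarith) (by linarith))
    have hfeq : vσi * vσj * vi * vj - vlj * vσj * vi ^ 2 - vli * vσi * vj ^ 2
        + vli * vlj * (vli * vlj - vui * vuj)
        = vlj * vσj * ((vi - vli) * (vui - vi)) + vli * vσi * ((vj - vlj) * (vuj - vj))
          + vσi * vσj * ((vi - vli) * (vj - vlj)) := by
      rw [hσi, hσj]; ring
    linarith [t1, t2, t3]
  have hprod : 0 ≤ vσi * vσj * vi * vj * (Real.cos (θ - φ) - Real.cos δ) := by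
    apply mul_nonneg _ (by linarith)
    positivity
  have hcf : 0 ≤ Real.cos δ * (vσi * vσj * vi * vj - vlj * vσj * vi ^ 2
      - vli * vσi * vj ^ 2 + vli * vlj * (vli * vlj - vui * vuj)) :=
    mul_nonneg hcδ0 hf
  have key : vσi * vσj * Real.cos φ * (vi * vj * Real.cos θ)
        + vσi * vσj * Real.sin φ * (vi * vj * Real.sin θ)
        + (-(vlj * Real.cos δ * vσj)) * vi ^ 2
        + (-(vli * Real.cos δ * vσi)) * vj ^ 2
        + vli * vlj * Real.cos δ * (vli * vlj - vui * vuj)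
      = vσi * vσj * vi * vj * (Real.cos (θ - φ) - Real.cos δ)
        + Real.cos δ * (vσi * vσj * vi * vj - vlj * vσj * vi ^ 2
          - vli * vσi * vj ^ 2 + vli * vlj * (vli * vlj - vui * vuj)) := by
    rw [← hcos]; ring
  linarith [hprod, hcf, key]
end

section
/- (First lifted nonlinear cut, LNC-1.) For all reals v_i, v_j, θ with vl_i ≤ v_i ≤ vu_i, vl_j ≤ v_j ≤ vu_j and θl ≤ θ ≤ θu, setting w_i = v_i², w_j = v_j², wR = v_i·v_j·cos θ and wI = v_i·v_j·sin θ, the following linear inequality holds: vσ_i·vσ_j·(wR·cos φ + wI·sin φ) − vu_j·cos δ·vσ_j·w_i − vu_i·cos δ·vσ_i·w_j ≥ vu_i·vu_j·cos δ·(vl_i·vl_j − vu_i·vu_j). -/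
open Real

theorem lifted_nonlinear_cut_one_valid
    (vli vui vlj vuj θl θu φ δ vσi vσj : ℝ)
    (hvli : 0 < vli) (hvi : vli ≤ vui) (hvlj : 0 < vlj) (hvj : vlj ≤ vuj)
    (hθl : -(Real.pi / 2) ≤ θl) (hθ : θl ≤ θu) (hθu : θu ≤ Real.pi / 2)
    (hφ : φ = (θu + θl) / 2) (hδ : δ = (θu - θl) / 2)
    (hσi : vσi = vli + vui) (hσj : vσj = vlj + vuj) :
    ∀ vi vj θ : ℝ, vli ≤ vi → vi ≤ vui → vlj ≤ vj → vj ≤ vuj → θl ≤ θ → θ ≤ θu →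
      vσi * vσj * ((vi * vj * Real.cos θ) * Real.cos φ + (vi * vj * Real.sin θ) * Real.sin φ)
        - vuj * Real.cos δ * vσj * vi ^ 2 - vui * Real.cos δ * vσi * vj ^ 2
        ≥ vui * vuj * Real.cos δ * (vli * vlj - vui * vuj) := by
  intro vi vj θ h1 h2 h3 h4 h5 h6
  have hδ0 : 0 ≤ δ := by rw [hδ]; linarith
  have hδπ : δ ≤ Real.pi / 2 := by rw [hδ]; linarith
  have hcosδ : 0 ≤ Real.cos δ := Real.cos_nonneg_of_mem_Icc ⟨by linarith, hδπ⟩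
  have htrig : Real.cos δ ≤ Real.cos (θ - φ) := by
    rw [← Real.cos_abs (θ - φ)]
    apply Real.cos_le_cos_of_nonneg_of_le_pi (abs_nonneg _)
    · linarith [Real.pi_pos]
    · rw [abs_le, hφ, hδ]; constructor <;> linarith
  have hkey : (vi * vj * Real.cos θ) * Real.cos φ + (vi * vj * Real.sin θ) * Real.sin φ
      = vi * vj * Real.cos (θ - φ) := by
    rw [Real.cos_sub]; ring
  rw [hkey]
  have hvi0 : 0 < vi := lt_of_lt_of_le hvli h1
  have hvj0 : 0 < vj := lt_of_lt_of_le hvlj h3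
  have hvσi : 0 < vσi := by rw [hσi]; linarith
  have hvσj : 0 < vσj := by rw [hσj]; linarith
  -- step 1: bound the trig term
  have step1 : vσi * vσj * (vi * vj * Real.cos (θ - φ)) ≥ vσi * vσj * (vi * vj * Real.cos δ) := by
    have : 0 < vσi * vσj * (vi * vj) := by positivity
    nlinarith [mul_le_mul_of_nonneg_left htrig (le_of_lt this)]
  -- step 2: polynomial inequality times cos δ
  have hvuj : 0 < vuj := lt_of_lt_of_le hvlj hvj
  have hvui : 0 < vui := lt_of_lt_of_le hvli hvi
  have hpoly : vσi * vσj * (vi * vj) - vuj * vσj * vi ^ 2 - vui * vσi * vj ^ 2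
      ≥ vui * vuj * (vli * vlj - vui * vuj) := by
    have t1 : 0 ≤ vuj * vσj * ((vui - vi) * (vi - vli)) := by
      apply mul_nonneg (by positivity)
      exact mul_nonneg (by linarith) (by linarith)
    have t2 : 0 ≤ vui * vσi * ((vuj - vj) * (vj - vlj)) := by
      apply mul_nonneg (by positivity)
      exact mul_nonneg (by linarith) (by linarith)
    have t3 : 0 ≤ vσi * vσj * ((vui - vi) * (vuj - vj)) := by
      apply mul_nonneg (by positivity)
      exact mul_nonneg (by linarith) (by linarith)
    have hid : vσi * vσj * (vi * vj) - vuj * vσj * vi ^ 2 - vui * vσi * vj ^ 2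
        - vui * vuj * (vli * vlj - vui * vuj)
        = vuj * vσj * ((vui - vi) * (vi - vli)) + vui * vσi * ((vuj - vj) * (vj - vlj))
          + vσi * vσj * ((vui - vi) * (vuj - vj)) := by
      rw [hσi, hσj]; ring
    linarith [hid ▸ (by linarith : (0:ℝ) ≤ vuj * vσj * ((vui - vi) * (vi - vli)) + vui * vσi * ((vuj - vj) * (vj - vlj)) + vσi * vσj * ((vui - vi) * (vuj - vj)))]
  nlinarith [mul_le_mul_of_nonneg_left hpoly hcosδ]
end

section
/- (Second lifted nonlinear cut, LNC-2.) For all reals v_i, v_j, θ with vl_i ≤ v_i ≤ vu_i, vl_j ≤ v_j ≤ vu_j and θl ≤ θ ≤ θu, setting w_i = v_i², w_j = v_j², wR = v_i·v_j·cos θ and wI = v_i·v_j·sin θ, the following linear inequality holds: vσ_i·vσ_j·(wR·cos φ + wI·sin φ) − vl_j·cos δ·vσ_j·w_i − vl_i·cos δ·vσ_i·w_j ≥ −vl_i·vl_j·cos δ·(vl_i·vl_j − vu_i·vu_j). -/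
open Real

theorem lifted_nonlinear_cut_two_valid
    (vli vui vlj vuj θl θu φ δ vσi vσj : ℝ)
    (hvli : 0 < vli) (hvi : vli ≤ vui) (hvlj : 0 < vlj) (hvj : vlj ≤ vuj)
    (hθl : -(Real.pi / 2) ≤ θl) (hθ : θl ≤ θu) (hθu : θu ≤ Real.pi / 2)
    (hφ : φ = (θu + θl) / 2) (hδ : δ = (θu - θl) / 2)
    (hσi : vσi = vli + vui) (hσj : vσj = vlj + vuj) :
    ∀ vi vj θ : ℝ, vli ≤ vi → vi ≤ vui → vlj ≤ vj → vj ≤ vuj → θl ≤ θ → θ ≤ θu →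
      vσi * vσj * ((vi * vj * Real.cos θ) * Real.cos φ + (vi * vj * Real.sin θ) * Real.sin φ)
        - vlj * Real.cos δ * vσj * vi ^ 2 - vli * Real.cos δ * vσi * vj ^ 2
        ≥ -(vli * vlj * Real.cos δ * (vli * vlj - vui * vuj)) := by
  intro vi vj θ h1 h2 h3 h4 h5 h6
  subst hσi hσj
  have hδ0 : 0 ≤ δ := by rw [hδ]; linarith
  have hδπ : δ ≤ Real.pi / 2 := by rw [hδ]; linarith
  have habs : |θ - φ| ≤ δ := by
    rw [abs_le]; constructor <;> (rw [hφ, hδ] at *; linarith)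
  have hc : Real.cos δ ≤ Real.cos (θ - φ) := by
    rw [← Real.cos_abs (θ - φ)]
    exact Real.cos_le_cos_of_nonneg_of_le_pi (abs_nonneg _)
      (hδπ.trans (by linarith [Real.pi_pos])) habs
  have hcδ : 0 ≤ Real.cos δ :=
    Real.cos_nonneg_of_mem_Icc ⟨by linarith, hδπ⟩
  have hkey : Real.cos θ * Real.cos φ + Real.sin θ * Real.sin φ = Real.cos (θ - φ) :=
    (Real.cos_sub θ φ).symm
  have hvij : 0 ≤ vi * vj := mul_nonneg (by linarith) (by linarith)
  have hσ : 0 ≤ (vli + vui) * (vlj + vuj) := mul_nonneg (by linarith) (by linarith)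
  -- polynomial certificate for the cos δ part
  have hg : (vli + vui) * (vlj + vuj) * (vi * vj) - vlj * (vlj + vuj) * vi ^ 2
      - vli * (vli + vui) * vj ^ 2 ≥ -(vli * vlj * (vli * vlj - vui * vuj)) := by
    nlinarith [mul_nonneg (mul_nonneg hvli.le (by linarith : (0:ℝ) ≤ vli + vui))
        (mul_nonneg (by linarith : (0:ℝ) ≤ vj - vlj) (by linarith : (0:ℝ) ≤ vuj - vj)),
      mul_nonneg (mul_nonneg (by linarith : (0:ℝ) ≤ vli + vui) (by linarith : (0:ℝ) ≤ vlj + vuj))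
        (mul_nonneg (by linarith : (0:ℝ) ≤ vi - vli) (by linarith : (0:ℝ) ≤ vj - vlj)),
      mul_nonneg (mul_nonneg hvlj.le (by linarith : (0:ℝ) ≤ vlj + vuj))
        (mul_nonneg (by linarith : (0:ℝ) ≤ vi - vli) (by linarith : (0:ℝ) ≤ vui - vi))]
  have h7 : (vli + vui) * (vlj + vuj) *
        ((vi * vj * Real.cos θ) * Real.cos φ + (vi * vj * Real.sin θ) * Real.sin φ)
      = (vli + vui) * (vlj + vuj) * (vi * vj) * Real.cos (θ - φ) := by
    rw [← hkey]; ring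
  rw [h7]
  have hA : 0 ≤ (vli + vui) * (vlj + vuj) * (vi * vj) * (Real.cos (θ - φ) - Real.cos δ) :=
    mul_nonneg (mul_nonneg hσ hvij) (by linarith)
  nlinarith [mul_le_mul_of_nonneg_left hg hcδ, hA]
end

section
/- (LNC dominates the first Extreme cut.) Let wR, wI, w_i, w_j be arbitrary real numbers satisfying w_j ≥ (vl_j)² and the lifted nonlinear cut vσ_i·vσ_j·(wR·cos φ + wI·sin φ) − vl_j·cos δ·vσ_j·w_i − vl_i·cos δ·vσ_i·w_j ≥ −vl_i·vl_j·cos δ·(vl_i·vl_j − vu_i·vu_j). Then the Extreme cut vl_j·cos δ·w_i − vσ_i·cos φ·wR − vσ_i·sin φ·wI + vl_i·vu_i·vl_j·cos δ ≤ 0 also holds. -/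
open Real

theorem lnc_dominates_first_extreme_cut
    (vli vui vlj vuj θl θu φ δ vσi vσj : ℝ)
    (hvli : 0 < vli) (hvi : vli ≤ vui) (hvlj : 0 < vlj) (hvj : vlj ≤ vuj)
    (hθl : -(Real.pi / 2) ≤ θl) (hθ : θl ≤ θu) (hθu : θu ≤ Real.pi / 2)
    (hφ : φ = (θu + θl) / 2) (hδ : δ = (θu - θl) / 2)
    (hσi : vσi = vli + vui) (hσj : vσj = vlj + vuj)
    (wR wI wi wj : ℝ)
    (hwj : wj ≥ vlj ^ 2)
    (hlnc : vσi * vσj * (wR * Real.cos φ + wI * Real.sin φ)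
      - vlj * Real.cos δ * vσj * wi - vli * Real.cos δ * vσi * wj
      ≥ -(vli * vlj * Real.cos δ * (vli * vlj - vui * vuj))) :
    vlj * Real.cos δ * wi - vσi * Real.cos φ * wR - vσi * Real.sin φ * wI
      + vli * vui * vlj * Real.cos δ ≤ 0 := by
  have hc : 0 ≤ Real.cos δ := by
    apply Real.cos_nonneg_of_mem_Icc
    constructor <;> [subst hδ; subst hδ] <;> nlinarith [Real.pi_pos]
  have hσjpos : 0 < vσj := by subst hσj; linarith
  have hσipos : 0 < vσi := by subst hσi; linarith
  have key : vli * Real.cos δ * vσi * (vlj ^ 2 - wj) ≤ 0 := by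
    have := mul_nonneg (mul_nonneg (mul_nonneg hvli.le hc) hσipos.le) (by linarith : (0:ℝ) ≤ wj - vlj ^ 2)
    nlinarith
  have h2 : (vlj * Real.cos δ * wi - vσi * Real.cos φ * wR - vσi * Real.sin φ * wI
      + vli * vui * vlj * Real.cos δ) * vσj ≤ 0 * vσj := by
    subst hσi hσj
    nlinarith [hlnc, key]
  exact le_of_mul_le_mul_right h2 hσjpos
end

section
/- (LNC dominates the second Extreme cut.) Let wR, wI, w_i, w_j be arbitrary real numbers satisfying w_i ≥ (vl_i)² and the lifted nonlinear cut vσ_i·vσ_j·(wR·cos φ + wI·sin φ) − vl_j·cos δ·vσ_j·w_i − vl_i·cos δ·vσ_i·w_j ≥ −vl_i·vl_j·cos δ·(vl_i·vl_j − vu_i·vu_j). Then the second Extreme cut vl_i·cos δ·w_j − vσ_j·cos φ·wR − vσ_j·sin φ·wI + vl_j·vu_j·vl_i·cos δ ≤ 0 also holds. -/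
open Real

theorem lnc_dominates_second_extreme_cut
    (vli vui vlj vuj θl θu φ δ vσi vσj : ℝ)
    (hvli : 0 < vli) (hvi : vli ≤ vui) (hvlj : 0 < vlj) (hvj : vlj ≤ vuj)
    (hθl : -(Real.pi / 2) ≤ θl) (hθ : θl ≤ θu) (hθu : θu ≤ Real.pi / 2)
    (hφ : φ = (θu + θl) / 2) (hδ : δ = (θu - θl) / 2)
    (hσi : vσi = vli + vui) (hσj : vσj = vlj + vuj)
    (wR wI wi wj : ℝ)
    (hwi : wi ≥ vli ^ 2)
    (hlnc : vσi * vσj * (wR * Real.cos φ + wI * Real.sin φ)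
      - vlj * Real.cos δ * vσj * wi - vli * Real.cos δ * vσi * wj
      ≥ -(vli * vlj * Real.cos δ * (vli * vlj - vui * vuj))) :
    vli * Real.cos δ * wj - vσj * Real.cos φ * wR - vσj * Real.sin φ * wI
      + vlj * vuj * vli * Real.cos δ ≤ 0 := by
  have hc : 0 ≤ Real.cos δ := by
    apply Real.cos_nonneg_of_mem_Icc
    constructor <;> [skip; skip] <;> rw [hδ] <;> linarith
  have hσip : 0 < vσi := by rw [hσi]; linarith
  have hσjp : 0 < vσj := by rw [hσj]; linarith
  have hslack : 0 ≤ vlj * Real.cos δ * vσj * (wi - vli ^ 2) := by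
    have : 0 ≤ wi - vli ^ 2 := by linarith
    have h2 : 0 ≤ vlj * Real.cos δ * vσj := by positivity
    exact mul_nonneg h2 this
  -- target * vσi ≤ 0
  have key : (vli * Real.cos δ * wj - vσj * Real.cos φ * wR - vσj * Real.sin φ * wI
      + vlj * vuj * vli * Real.cos δ) * vσi ≤ 0 := by
    have h1 : vlj * Real.cos δ * vσj * wi - vli * vlj * Real.cos δ * (vli * vlj - vui * vuj)
        - vlj * vuj * vli * Real.cos δ * vσi = vlj * Real.cos δ * vσj * (wi - vli ^ 2) := by
      rw [hσi, hσj]; ring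
    nlinarith [hlnc, hslack]
  have := le_of_mul_le_mul_right (by linarith [key] : (vli * Real.cos δ * wj - vσj * Real.cos φ * wR - vσj * Real.sin φ * wI + vlj * vuj * vli * Real.cos δ) * vσi ≤ 0 * vσi) hσip
  linarith
end

section
/- (LNC dominates the bound-based cut.) Let wR, wI, w_i, w_j be arbitrary real numbers satisfying w_i ≥ (vl_i)², w_j ≥ (vl_j)², and the lifted nonlinear cut vσ_i·vσ_j·(wR·cos φ + wI·sin φ) − vl_j·cos δ·vσ_j·w_i − vl_i·cos δ·vσ_i·w_j ≥ −vl_i·vl_j·cos δ·(vl_i·vl_j − vu_i·vu_j). Then wR·cos φ + wI·sin φ ≥ vl_i·vl_j·cos δ. -/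
open Real

theorem lnc_dominates_bound_cut
    (vli vui vlj vuj θl θu φ δ vσi vσj : ℝ)
    (hvli : 0 < vli) (hvi : vli ≤ vui) (hvlj : 0 < vlj) (hvj : vlj ≤ vuj)
    (hθl : -(Real.pi / 2) ≤ θl) (hθ : θl ≤ θu) (hθu : θu ≤ Real.pi / 2)
    (hφ : φ = (θu + θl) / 2) (hδ : δ = (θu - θl) / 2)
    (hσi : vσi = vli + vui) (hσj : vσj = vlj + vuj)
    (wR wI wi wj : ℝ)
    (hwi : wi ≥ vli ^ 2) (hwj : wj ≥ vlj ^ 2)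
    (hlnc : vσi * vσj * (wR * Real.cos φ + wI * Real.sin φ)
      - vlj * Real.cos δ * vσj * wi - vli * Real.cos δ * vσi * wj
      ≥ -(vli * vlj * Real.cos δ * (vli * vlj - vui * vuj))) :
    wR * Real.cos φ + wI * Real.sin φ ≥ vli * vlj * Real.cos δ := by
  have hc : 0 ≤ Real.cos δ := by
    apply Real.cos_nonneg_of_mem_Icc
    constructor <;> [skip; skip] <;> rw [hδ] <;> linarith [Real.pi_pos]
  have hσipos : 0 < vσi := by rw [hσi]; linarith
  have hσjpos : 0 < vσj := by rw [hσj]; linarith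
  have key : vσi * vσj * (wR * Real.cos φ + wI * Real.sin φ)
      ≥ vσi * vσj * (vli * vlj * Real.cos δ) := by
    subst hσi hσj
    nlinarith [mul_nonneg (mul_nonneg hvlj.le hc) (mul_nonneg hσjpos.le (sub_nonneg.2 hwi)),
      mul_nonneg (mul_nonneg hvli.le hc) (mul_nonneg hσipos.le (sub_nonneg.2 hwj))]
  exact le_of_mul_le_mul_left key (mul_pos hσipos hσjpos)
end

section
/- Let θl, θu ∈ (−π/2, π/2) with θl ≠ 0 and θu ≠ 0, and set φ = (θu + θl)/2, δ = (θu − θl)/2. Define r(t) = (√(1 + t²) − 1)/t for nonzero real t. Then (1 − r(tan θl)·r(tan θu)) / (1 + r(tan θl)·r(tan θu)) = cos φ / cos δ. -/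
open Real

lemma qcqp_aux_half (θ : ℝ) (h1 : -(Real.pi / 2) < θ) (h2 : θ < Real.pi / 2)
    (h0 : θ ≠ 0) :
    (Real.sqrt (1 + Real.tan θ ^ 2) - 1) / Real.tan θ = Real.tan (θ / 2) := by
  have hc : 0 < Real.cos θ := Real.cos_pos_of_mem_Ioo ⟨h1, h2⟩
  have hs : Real.sin θ ≠ 0 := by
    intro h
    have := (Real.sin_eq_zero_iff_of_lt_of_lt
      (by linarith [Real.pi_gt_three]) (by linarith [Real.pi_gt_three])).mp h
    exact h0 this
  have hsqrt : Real.sqrt (1 + Real.tan θ ^ 2) = 1 / Real.cos θ := by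
    have h1t : 1 + Real.tan θ ^ 2 = (1 / Real.cos θ) ^ 2 := by
      rw [Real.tan_eq_sin_div_cos]
      field_simp
      linarith [Real.sin_sq_add_cos_sq θ]
    rw [h1t, Real.sqrt_sq (by positivity)]
  rw [hsqrt, Real.tan_eq_sin_div_cos, Real.tan_eq_sin_div_cos]
  have hc2 : 0 < Real.cos (θ / 2) := by
    apply Real.cos_pos_of_mem_Ioo
    constructor <;> [linarith; linarith]
  have hsin : Real.sin θ = 2 * Real.sin (θ / 2) * Real.cos (θ / 2) := by
    rw [← Real.sin_two_mul]; ring_nf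
  have hcos : Real.cos θ = 1 - 2 * Real.sin (θ / 2) ^ 2 := by
    have h := Real.cos_sq (θ / 2)
    rw [show 2 * (θ / 2) = θ by ring] at h
    nlinarith [Real.sin_sq_add_cos_sq (θ / 2)]
  rw [hsin, hcos]
  have hsc2 : Real.sin (θ / 2) ^ 2 + Real.cos (θ / 2) ^ 2 = 1 :=
    Real.sin_sq_add_cos_sq _
  have hsne : Real.sin (θ / 2) * Real.cos (θ / 2) ≠ 0 := by
    rw [hsin] at hs
    intro h; apply hs; rw [mul_assoc, h]; ring
  have hs2 : Real.sin (θ / 2) ≠ 0 := left_ne_zero_of_mul hsne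
  have hc' : Real.cos θ ≠ 0 := ne_of_gt hc
  rw [hcos] at hc'
  field_simp
  ring

theorem qcqp_coefficient_cos
    (θl θu φ δ : ℝ)
    (hθl1 : -(Real.pi / 2) < θl) (hθl2 : θl < Real.pi / 2) (hθl0 : θl ≠ 0)
    (hθu1 : -(Real.pi / 2) < θu) (hθu2 : θu < Real.pi / 2) (hθu0 : θu ≠ 0)
    (hφ : φ = (θu + θl) / 2) (hδ : δ = (θu - θl) / 2) :
    (1 - ((Real.sqrt (1 + Real.tan θl ^ 2) - 1) / Real.tan θl) *
          ((Real.sqrt (1 + Real.tan θu ^ 2) - 1) / Real.tan θu)) /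
      (1 + ((Real.sqrt (1 + Real.tan θl ^ 2) - 1) / Real.tan θl) *
          ((Real.sqrt (1 + Real.tan θu ^ 2) - 1) / Real.tan θu))
      = Real.cos φ / Real.cos δ := by
  rw [qcqp_aux_half θl hθl1 hθl2 hθl0, qcqp_aux_half θu hθu1 hθu2 hθu0]
  set a := θl / 2 with ha
  set b := θu / 2 with hb
  have hca : 0 < Real.cos a := by
    apply Real.cos_pos_of_mem_Ioo; constructor <;> [skip; skip] <;> rw [ha] <;> linarith
  have hcb : 0 < Real.cos b := by
    apply Real.cos_pos_of_mem_Ioo; constructor <;> [skip; skip] <;> rw [hb] <;> linarith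
  have hφ' : φ = a + b := by rw [hφ, ha, hb]; ring
  have hδ' : δ = b - a := by rw [hδ, ha, hb]; ring
  have hcδ : 0 < Real.cos δ := by
    apply Real.cos_pos_of_mem_Ioo; constructor <;> rw [hδ] <;> linarith
  rw [hφ', Real.cos_add]
  have hδc : Real.cos δ = Real.cos b * Real.cos a + Real.sin b * Real.sin a := by
    rw [hδ', Real.cos_sub]
  rw [Real.tan_eq_sin_div_cos, Real.tan_eq_sin_div_cos]
  have hden : 1 + Real.sin a / Real.cos a * (Real.sin b / Real.cos b) ≠ 0 := by
    have : 1 + Real.sin a / Real.cos a * (Real.sin b / Real.cos b)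
        = Real.cos δ / (Real.cos a * Real.cos b) := by
      rw [hδc]; field_simp
    rw [this]
    positivity
  rw [hδc]
  field_simp
end

section
/- (Equivalence of the first Chen–Atamtürk–Oren cut with LNC-1.) Define π0 = −vl_i·vl_j·vu_i·vu_j, π1 = −vl_j·vu_j, π2 = −vl_i·vu_i, π3 = vσ_i·vσ_j·cos φ / cos δ, π4 = vσ_i·vσ_j·sin φ / cos δ, and assume cos δ > 0. Then for all real wR, wI, w_i, w_j, the inequality π3·wR + π4·wI + (π1 − (vu_j)²)·w_i + (π2 − (vu_i)²)·w_j ≥ −(π0 + (vu_i)²·(vu_j)²) holds if and only if vσ_i·vσ_j·(wR·cos φ + wI·sin φ) − vu_j·cos δ·vσ_j·w_i − vu_i·cos δ·vσ_i·w_j ≥ vu_i·vu_j·cos δ·(vl_i·vl_j − vu_i·vu_j). -/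
open Real

theorem cao_cut_one_equiv_lnc_one
    (vli vui vlj vuj θl θu φ δ vσi vσj π0 π1 π2 π3 π4 : ℝ)
    (hvli : 0 < vli) (hvi : vli ≤ vui) (hvlj : 0 < vlj) (hvj : vlj ≤ vuj)
    (hθl : -(Real.pi / 2) ≤ θl) (hθ : θl ≤ θu) (hθu : θu ≤ Real.pi / 2)
    (hφ : φ = (θu + θl) / 2) (hδ : δ = (θu - θl) / 2)
    (hσi : vσi = vli + vui) (hσj : vσj = vlj + vuj)
    (hcosδ : 0 < Real.cos δ)
    (hπ0 : π0 = -(vli * vlj * vui * vuj)) (hπ1 : π1 = -(vlj * vuj)) (hπ2 : π2 = -(vli * vui))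
    (hπ3 : π3 = vσi * vσj * Real.cos φ / Real.cos δ)
    (hπ4 : π4 = vσi * vσj * Real.sin φ / Real.cos δ) :
    ∀ wR wI wi wj : ℝ,
      (π3 * wR + π4 * wI + (π1 - vuj ^ 2) * wi + (π2 - vui ^ 2) * wj
        ≥ -(π0 + vui ^ 2 * vuj ^ 2))
      ↔ (vσi * vσj * (wR * Real.cos φ + wI * Real.sin φ)
        - vuj * Real.cos δ * vσj * wi - vui * Real.cos δ * vσi * wj
        ≥ vui * vuj * Real.cos δ * (vli * vlj - vui * vuj)) := by
  intro wR wI wi wj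
  subst hπ0 hπ1 hπ2 hπ3 hπ4 hσi hσj
  have hc : Real.cos δ ≠ 0 := ne_of_gt hcosδ
  rw [ge_iff_le, ge_iff_le, ← mul_le_mul_iff_of_pos_right hcosδ]
  have h1 : (((vli + vui) * (vlj + vuj) * Real.cos φ / Real.cos δ) * wR +
      ((vli + vui) * (vlj + vuj) * Real.sin φ / Real.cos δ) * wI +
      (-(vlj * vuj) - vuj ^ 2) * wi + (-(vli * vui) - vui ^ 2) * wj) * Real.cos δ =
      (vli + vui) * (vlj + vuj) * (wR * Real.cos φ + wI * Real.sin φ)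
        - vuj * Real.cos δ * (vlj + vuj) * wi - vui * Real.cos δ * (vli + vui) * wj := by
    field_simp
    ring
  have h2 : -(-(vli * vlj * vui * vuj) + vui ^ 2 * vuj ^ 2) * Real.cos δ =
      vui * vuj * Real.cos δ * (vli * vlj - vui * vuj) := by ring
  rw [h1, h2]
end
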